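/- Completeness of the metric HML: in any finite-state image-finite pLTS, the logical state metric d^L(s,t) = sup_φ |⟦φ⟧(s) − ⟦φ⟧(t)| is itself a state-based bisimulation metric; hence d_b ⊑ d^L, and combined with soundness, d_b = d^L and K(d_b) equals the logical distribution metric. -/

import Mathlib

open scoped BigOperators

/-- A (full) probability distribution over a finite set `S`. -/
def IsDist {S : Type} [Fintype S] (Δ : S → ℝ) : Prop :=
  (∀ s, 0 ≤ Δ s) ∧ ∑ s, Δ s = 1

/-- A matching (coupling) for a pair of distributions. -/
def IsMatching {S : Type} [Fintype S] (ω : S × S → ℝ) (Δ Θ : S → ℝ) : Prop :=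
  IsDist ω ∧ (∀ s, ∑ t, ω (s, t) = Δ s) ∧ (∀ t, ∑ s, ω (s, t) = Θ t)

/-- The Kantorovich lifting of `d` (primal formulation, via matchings). -/
noncomputable def Kan {S : Type} [Fintype S] (d : S → S → ℝ) (Δ Θ : S → ℝ) : ℝ :=
  sInf {r | ∃ ω : S × S → ℝ, IsMatching ω Δ Θ ∧ r = ∑ p : S × S, d p.1 p.2 * ω p}

/-- The Kantorovich lifting of `d` (dual linear-programming formulation). -/
noncomputable def KanD {S : Type} [Fintype S] (d : S → S → ℝ) (Δ Θ : S → ℝ) : ℝ :=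
  sSup {r | ∃ x : S → ℝ, (∀ s, 0 ≤ x s ∧ x s ≤ 1) ∧ (∀ s t, x s - x t ≤ d s t) ∧
    r = ∑ s, (Δ s - Θ s) * x s}

/-- `d` is a pseudometric. -/
def IsPseudometric {X : Type*} (d : X → X → ℝ) : Prop :=
  (∀ x, d x x = 0) ∧ (∀ x y, d x y = d y x) ∧ ∀ x y z, d x z ≤ d x y + d y z

/-- `d` is `1`-bounded (takes values in `[0,1]`). -/
def Bounded1 {X : Type*} (d : X → X → ℝ) : Prop := ∀ x y, 0 ≤ d x y ∧ d x y ≤ 1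

open Classical in
/-- Infimum of a set of reals with the convention `inf ∅ = 1`. -/
noncomputable def inf1 (s : Set ℝ) : ℝ := if s.Nonempty then sInf s else 1

open Classical in
/-- Supremum of a set of reals with the convention `sup ∅ = 0`. -/
noncomputable def sup0 (s : Set ℝ) : ℝ := if s.Nonempty then sSup s else 0

/-- The Hausdorff lifting of a `1`-bounded metric to subsets. -/
noncomputable def hausd {X : Type*} (d : X → X → ℝ) (P Q : Set X) : ℝ :=
  max (sup0 {r | ∃ x ∈ P, r = inf1 {r' | ∃ y ∈ Q, r' = d x y}})
      (sup0 {r | ∃ y ∈ Q, r = inf1 {r' | ∃ x ∈ P, r' = d x y}})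

/-- A probabilistic labelled transition system. -/
structure PLTS (S : Type) (A : Type) where
  trans : S → A → (S → ℝ) → Prop

/-- The set of `a`-successor distributions of state `s`. -/
def der {S A : Type} (T : PLTS S A) (s : S) (a : A) : Set (S → ℝ) := {Δ | T.trans s a Δ}

/-- Image-finiteness of a pLTS. -/
def ImageFinite {S A : Type} (T : PLTS S A) : Prop := ∀ s a, (der T s a).Finite

/-- Every transition target is a (full) distribution. -/
def WellFormed {S A : Type} [Fintype S] (T : PLTS S A) : Prop :=
  ∀ s a Δ, T.trans s a Δ → IsDist Δ

/-- `d` is a state-based bisimulation metric. -/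
def IsSBM {S A : Type} [Fintype S] (T : PLTS S A) (d : S → S → ℝ) : Prop :=
  IsPseudometric d ∧ Bounded1 d ∧
  ∀ s t (ε : ℝ), 0 ≤ ε → ε < 1 → d s t ≤ ε →
    ∀ a Δ, T.trans s a Δ → ∃ Δ', T.trans t a Δ' ∧ Kan d Δ Δ' ≤ ε

/-- The unit interval `[0,1]` as a type of probabilities. -/
abbrev UI : Type := { p : ℝ // 0 ≤ p ∧ p ≤ 1 }

mutual
  /-- State formulae of the metric HML. -/
  inductive SF (A : Type) : Type where
    | top : SF A
    | neg : SF A → SF A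
    | sub : SF A → UI → SF A
    | and : SF A → SF A → SF A
    | dia : A → DF A → SF A
  /-- Distribution formulae of the metric HML. -/
  inductive DF (A : Type) : Type where
    | sub : DF A → UI → DF A
    | and : DF A → DF A → DF A
    | box : SF A → DF A
end

mutual
  /-- Semantics of state formulae. -/
  noncomputable def semS {S A : Type} [Fintype S] (T : PLTS S A) : SF A → S → ℝ
    | SF.top, _ => 1
    | SF.neg φ, s => 1 - semS T φ s
    | SF.sub φ p, s => max (semS T φ s - p.1) 0
    | SF.and φ₁ φ₂, s => min (semS T φ₁ s) (semS T φ₂ s)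
    | SF.dia a ψ, s => sup0 {r | ∃ Δ, T.trans s a Δ ∧ r = semD T ψ Δ}
  /-- Semantics of distribution formulae. -/
  noncomputable def semD {S A : Type} [Fintype S] (T : PLTS S A) : DF A → (S → ℝ) → ℝ
    | DF.sub ψ p, Δ => max (semD T ψ Δ - p.1) 0
    | DF.and ψ₁ ψ₂, Δ => min (semD T ψ₁ Δ) (semD T ψ₂ Δ)
    | DF.box φ, Δ => ∑ s, Δ s * semS T φ s
end

/-- The logical metric on states induced by state formulae. -/
noncomputable def dLogic {S A : Type} [Fintype S] (T : PLTS S A) : S → S → ℝ :=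
  fun s t => sSup {r | ∃ φ : SF A, r = |semS T φ s - semS T φ t|}

/-- The logical metric on distributions induced by distribution formulae. -/
noncomputable def dDLogic {S A : Type} [Fintype S] (T : PLTS S A) : (S → ℝ) → (S → ℝ) → ℝ :=
  fun Δ Θ => sSup {r | ∃ ψ : DF A, r = |semD T ψ Δ - semD T ψ Θ|}

-- helpers for sup0
theorem le_sup0 {s : Set ℝ} (hfin : s.Finite) {x : ℝ} (hx : x ∈ s) : x ≤ sup0 s := by
  rw [sup0, if_pos ⟨x, hx⟩]
  exact le_csSup hfin.bddAbove hx

theorem sup0_le {s : Set ℝ} {b : ℝ} (hb : 0 ≤ b) (h : ∀ x ∈ s, x ≤ b) : sup0 s ≤ b := by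
  rw [sup0]
  split_ifs with hne
  · exact csSup_le hne h
  · exact hb

theorem sup0_nonneg {s : Set ℝ} (hfin : s.Finite) (h : ∀ x ∈ s, 0 ≤ x) : 0 ≤ sup0 s := by
  rw [sup0]
  split_ifs with hne
  · obtain ⟨x, hx⟩ := hne
    exact le_trans (h x hx) (le_csSup hfin.bddAbove hx)
  · norm_num

-- bounds on semantics
mutual
theorem semS_bounds {S A : Type} [Fintype S] (T : PLTS S A)
    (hwf : WellFormed T) (hfin : ImageFinite T) :
    ∀ φ : SF A, ∀ s, 0 ≤ semS T φ s ∧ semS T φ s ≤ 1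
  | SF.top, s => by simp [semS]
  | SF.neg φ, s => by
    have := semS_bounds T hwf hfin φ s
    simp only [semS]
    constructor <;> linarith [this.1, this.2]
  | SF.sub φ p, s => by
    have := semS_bounds T hwf hfin φ s
    simp only [semS]
    constructor
    · exact le_max_right _ _
    · refine max_le ?_ (by norm_num)
      linarith [this.2, p.2.1]
  | SF.and φ₁ φ₂, s => by
    have h1 := semS_bounds T hwf hfin φ₁ s
    have h2 := semS_bounds T hwf hfin φ₂ s
    simp only [semS]
    exact ⟨le_min h1.1 h2.1, le_trans (min_le_left _ _) h1.2⟩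
  | SF.dia a ψ, s => by
    simp only [semS]
    have hsetfin : {r | ∃ Δ, T.trans s a Δ ∧ r = semD T ψ Δ}.Finite := by
      have : {r | ∃ Δ, T.trans s a Δ ∧ r = semD T ψ Δ} = (semD T ψ) '' (der T s a) := by
        ext r
        simp [der, eq_comm]
      rw [this]
      exact (hfin s a).image _
    constructor
    · refine sup0_nonneg hsetfin ?_
      rintro r ⟨Δ, hΔ, rfl⟩
      exact (semD_bounds T hwf hfin ψ Δ (hwf s a Δ hΔ)).1
    · refine sup0_le (by norm_num) ?_
      rintro r ⟨Δ, hΔ, rfl⟩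
      exact (semD_bounds T hwf hfin ψ Δ (hwf s a Δ hΔ)).2

theorem semD_bounds {S A : Type} [Fintype S] (T : PLTS S A)
    (hwf : WellFormed T) (hfin : ImageFinite T) :
    ∀ ψ : DF A, ∀ Δ, IsDist Δ → 0 ≤ semD T ψ Δ ∧ semD T ψ Δ ≤ 1
  | DF.sub ψ p, Δ, hΔ => by
    have := semD_bounds T hwf hfin ψ Δ hΔ
    simp only [semD]
    constructor
    · exact le_max_right _ _
    · refine max_le ?_ (by norm_num)
      linarith [this.2, p.2.1]
  | DF.and ψ₁ ψ₂, Δ, hΔ => by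
    have h1 := semD_bounds T hwf hfin ψ₁ Δ hΔ
    have h2 := semD_bounds T hwf hfin ψ₂ Δ hΔ
    simp only [semD]
    exact ⟨le_min h1.1 h2.1, le_trans (min_le_left _ _) h1.2⟩
  | DF.box φ, Δ, hΔ => by
    simp only [semD]
    constructor
    · exact Finset.sum_nonneg fun s _ =>
        mul_nonneg (hΔ.1 s) (semS_bounds T hwf hfin φ s).1
    · calc ∑ s, Δ s * semS T φ s ≤ ∑ s, Δ s := by
            refine Finset.sum_le_sum fun s _ => ?_
            have := semS_bounds T hwf hfin φ s
            nlinarith [hΔ.1 s]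
        _ = 1 := hΔ.2
end

noncomputable def Lmap {S : Type} [Fintype S] (d : S → S → ℝ) :
    ((S × S) → ℝ) →ₗ[ℝ] ((S → ℝ) × (S → ℝ) × ℝ) where
  toFun ω := (fun s => ∑ t, ω (s, t), fun t => ∑ s, ω (s, t), ∑ p : S × S, d p.1 p.2 * ω p)
  map_add' := by
    intro ω1 ω2
    refine Prod.ext ?_ (Prod.ext ?_ ?_) <;>
      simp [Finset.sum_add_distrib, mul_add] <;> rfl
  map_smul' := by
    intro c ω
    refine Prod.ext ?_ (Prod.ext ?_ ?_)
    · funext z; simp [Finset.mul_sum]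
    · funext z; simp [Finset.mul_sum]
    · simp [Finset.mul_sum, mul_left_comm]

theorem nonempty_of_isDist {S : Type} [Fintype S] {Δ : S → ℝ} (h : IsDist Δ) : Nonempty S := by
  by_contra hne
  simp only [not_nonempty_iff] at hne
  have := h.2
  rw [Finset.univ_eq_empty, Finset.sum_empty] at this
  norm_num at this

theorem prodMatching {S : Type} [Fintype S] {Δ Θ : S → ℝ} (hΔ : IsDist Δ) (hΘ : IsDist Θ) :
    IsMatching (fun p : S × S => Δ p.1 * Θ p.2) Δ Θ := by
  refine ⟨⟨fun p => mul_nonneg (hΔ.1 p.1) (hΘ.1 p.2), ?_⟩, fun s => ?_, fun t => ?_⟩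
  · rw [Fintype.sum_prod_type]
    simp only [← Finset.mul_sum, hΘ.2, mul_one, hΔ.2]
  · simp only [← Finset.mul_sum, hΘ.2, mul_one]
  · simp only [← Finset.sum_mul, hΔ.2, one_mul]

theorem cost_bddBelow {S : Type} [Fintype S] {d : S → S → ℝ} (hd : ∀ x y, 0 ≤ d x y)
    {Δ Θ : S → ℝ} :
    BddBelow {r | ∃ ω : S × S → ℝ, IsMatching ω Δ Θ ∧ r = ∑ p : S × S, d p.1 p.2 * ω p} := by
  refine ⟨0, fun r hr => ?_⟩
  obtain ⟨ω, hω, rfl⟩ := hr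
  exact Finset.sum_nonneg fun p _ => mul_nonneg (hd _ _) (hω.1.1 p)

theorem kan_dual_approx {S : Type} [Fintype S] {d : S → S → ℝ}
    (hpm : IsPseudometric d) (hb : Bounded1 d) {Δ Θ : S → ℝ}
    (hΔ : IsDist Δ) (hΘ : IsDist Θ) {c : ℝ} (hc : c < Kan d Δ Θ) :
    ∃ u : S → ℝ, (∀ s, 0 ≤ u s ∧ u s ≤ 1) ∧ (∀ s t, u s - u t ≤ d s t) ∧
      c < ∑ s, (Δ s - Θ s) * u s := by
  classical
  have hSne : Nonempty S := nonempty_of_isDist hΔ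
  have huniv : (Finset.univ : Finset S).Nonempty := Finset.univ_nonempty
  have hbdd := cost_bddBelow (d := d) (fun x y => (hb x y).1) (Δ := Δ) (Θ := Θ)
  -- the compact convex set
  set C : Set ((S → ℝ) × (S → ℝ) × ℝ) := Lmap d '' stdSimplex ℝ (S × S) with hC
  have hCconv : Convex ℝ C := (convex_stdSimplex ℝ (S × S)).linear_image (Lmap d)
  have hCcomp : IsCompact C :=
    (isCompact_stdSimplex ℝ (S × S)).image (Lmap d).continuous_of_finiteDimensional
  have hnotmem : ((Δ, Θ, c) : (S → ℝ) × (S → ℝ) × ℝ) ∉ C := by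
    rintro ⟨ω, hωs, heq⟩
    have h1 : (∀ s, ∑ t, ω (s, t) = Δ s) := by
      intro s; exact congrFun (congrArg Prod.fst heq) s
    have h2 : (∀ t, ∑ s, ω (s, t) = Θ t) := by
      intro t; exact congrFun (congrArg Prod.fst (congrArg Prod.snd heq)) t
    have h3 : (∑ p : S × S, d p.1 p.2 * ω p) = c :=
      congrArg (fun z => z.2.2) heq
    have hmem : (∑ p : S × S, d p.1 p.2 * ω p) ∈
        {r | ∃ ω : S × S → ℝ, IsMatching ω Δ Θ ∧ r = ∑ p : S × S, d p.1 p.2 * ω p} :=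
      ⟨ω, ⟨⟨hωs.1, hωs.2⟩, h1, h2⟩, rfl⟩
    have := csInf_le hbdd hmem
    rw [h3] at this
    exact absurd (lt_of_lt_of_le hc this) (lt_irrefl c)
  obtain ⟨f, u, hfC, hfx⟩ :=
    geometric_hahn_banach_closed_point hCconv hCcomp.isClosed hnotmem
  set x : S → ℝ := fun s => f (Pi.single s 1, 0, 0) with hxdef
  set y : S → ℝ := fun t => f (0, Pi.single t 1, 0) with hydef
  set lam : ℝ := f (0, 0, 1) with hlamdef
  -- decomposition of f on triples
  have hdec : ∀ (r q : S → ℝ) (m : ℝ),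
      f (r, q, m) = ∑ s, r s * x s + ∑ t, q t * y t + m * lam := by
    intro r q m
    have hsplit : ((r, q, m) : (S → ℝ) × (S → ℝ) × ℝ)
        = (∑ s, r s • ((Pi.single s 1, 0, 0) : (S → ℝ) × (S → ℝ) × ℝ))
          + (∑ t, q t • ((0, Pi.single t 1, 0) : (S → ℝ) × (S → ℝ) × ℝ))
          + m • ((0, 0, 1) : (S → ℝ) × (S → ℝ) × ℝ) := by
      refine Prod.ext ?_ (Prod.ext ?_ ?_)
      · simp only [Prod.fst_sum, Prod.fst_add, Prod.smul_fst]
        funext z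
        simp [Pi.single_apply, Finset.sum_ite_eq', mul_comm]
      · simp only [Prod.snd_sum, Prod.snd_add, Prod.fst_sum, Prod.smul_snd, Prod.smul_fst,
          Prod.fst_add]
        funext z
        simp [Pi.single_apply, Finset.sum_ite_eq', mul_comm]
      · simp [Prod.snd_sum, Prod.smul_snd]
    rw [hsplit]
    simp only [map_add, map_sum, map_smul, smul_eq_mul]
    try ring
  -- constraints from separation
  have hcon : ∀ s t : S, x s + y t + d s t * lam < u := by
    intro s t
    have hmem : (Lmap d) (Pi.single (s, t) 1) ∈ C :=
      Set.mem_image_of_mem _ (single_mem_stdSimplex ℝ (s, t))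
    have := hfC _ hmem
    have hval : (Lmap d) (Pi.single (s, t) 1)
        = ((Pi.single s 1 : S → ℝ), (Pi.single t 1 : S → ℝ), d s t) := by
      refine Prod.ext ?_ (Prod.ext ?_ ?_)
      · funext z
        show (∑ t', (Pi.single (s, t) 1 : S × S → ℝ) (z, t')) = _
        by_cases hz : z = s <;> simp [Pi.single_apply, Prod.ext_iff, hz]
      · funext z
        show (∑ s', (Pi.single (s, t) 1 : S × S → ℝ) (s', z)) = _
        by_cases hz : z = t <;> simp [Pi.single_apply, Prod.ext_iff, hz]
      · show (∑ p : S × S, d p.1 p.2 * (Pi.single (s, t) 1 : S × S → ℝ) p) = _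
        have hz : ∀ p : S × S, p ∈ Finset.univ → p ≠ (s, t) →
            d p.1 p.2 * (Pi.single (s, t) 1 : S × S → ℝ) p = 0 := by
          intro p _ hp; rw [Pi.single_eq_of_ne hp]; ring
        rw [Finset.sum_eq_single (s, t) hz (by simp)]
        simp
    rw [hval] at this
    have hdec1 : f ((Pi.single s 1 : S → ℝ), (Pi.single t 1 : S → ℝ), d s t)
        = x s + y t + d s t * lam := by
      rw [hdec]
      have e1 : ∑ s' : S, (Pi.single s 1 : S → ℝ) s' * x s' = x s := by
        simp [Pi.single_apply, ite_mul]
      have e2 : ∑ t' : S, (Pi.single t 1 : S → ℝ) t' * y t' = y t := by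
        simp [Pi.single_apply, ite_mul]
      rw [e1, e2]
    rw [hdec1] at this
    exact this
  have hobj : u < ∑ s, Δ s * x s + ∑ t, Θ t * y t + c * lam := by
    rw [← hdec]; exact hfx
  -- the product coupling shows lam < 0
  have hlamneg : lam < 0 := by
    set ω0 : S × S → ℝ := fun p => Δ p.1 * Θ p.2 with hω0
    have hm : IsMatching ω0 Δ Θ := prodMatching hΔ hΘ
    set m0 : ℝ := ∑ p : S × S, d p.1 p.2 * ω0 p with hm0
    have hmem : ((Δ, Θ, m0) : (S → ℝ) × (S → ℝ) × ℝ) ∈ C := by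
      refine ⟨ω0, ⟨hm.1.1, hm.1.2⟩, ?_⟩
      refine Prod.ext ?_ (Prod.ext ?_ ?_)
      · funext z; exact hm.2.1 z
      · funext z; exact hm.2.2 z
      · rfl
    have h1 := hfC _ hmem
    rw [hdec] at h1
    rw [hdec] at hfx
    have hKle : Kan d Δ Θ ≤ m0 := csInf_le hbdd ⟨ω0, hm, rfl⟩
    have hcm : c < m0 := lt_of_lt_of_le hc hKle
    nlinarith [h1, hfx, hcm]
  set μ : ℝ := -lam with hμ
  have hμpos : 0 < μ := by simp [hμ]; linarith
  set f0 : S → ℝ := fun s => x s / μ with hf0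
  set g0 : S → ℝ := fun t => (u - y t) / μ with hg0
  have hfg : ∀ s t, f0 s - g0 t ≤ d s t := by
    intro s t
    have := hcon s t
    rw [hf0, hg0]
    rw [div_sub_div_same, div_le_iff₀ hμpos]
    simp only [hμ]
    nlinarith [this]
  have hsumΘ : ∑ t, Θ t = 1 := hΘ.2
  have hobj2 : c < ∑ s, Δ s * f0 s - ∑ t, Θ t * g0 t := by
    have h1 : ∑ s, Δ s * f0 s = (∑ s, Δ s * x s) / μ := by
      rw [Finset.sum_div]; exact Finset.sum_congr rfl fun s _ => by rw [hf0]; ring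
    have h2 : ∑ t, Θ t * g0 t = (u - ∑ t, Θ t * y t) / μ := by
      rw [eq_div_iff (ne_of_gt hμpos), Finset.sum_mul]
      rw [show u - ∑ t, Θ t * y t = ∑ t, (Θ t * u - Θ t * y t) by
        rw [Finset.sum_sub_distrib, ← Finset.sum_mul, hsumΘ, one_mul]]
      refine Finset.sum_congr rfl fun t _ => ?_
      have hg : g0 t = (u - y t) / μ := by rw [hg0]
      rw [hg]
      field_simp
    rw [h1, h2, div_sub_div_same, lt_div_iff₀ hμpos]
    simp only [hμ]
    nlinarith [hobj]
  -- collapse to a single Lipschitz function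
  set w : S → ℝ := fun t => Finset.univ.inf' huniv (fun s' => d s' t + g0 s') with hw
  have hw_le_g : ∀ t, w t ≤ g0 t := by
    intro t
    have h1 : w t ≤ d t t + g0 t := Finset.inf'_le _ (Finset.mem_univ t)
    rw [hpm.1 t, zero_add] at h1
    exact h1
  have hf_le_w : ∀ t, f0 t ≤ w t := by
    intro t
    refine Finset.le_inf' huniv _ fun s' _ => ?_
    have h := hfg t s'
    have hsym := hpm.2.1 s' t
    linarith
  have hwLip : ∀ a b, w a - w b ≤ d a b := by
    intro a b
    obtain ⟨s', -, hs'⟩ := Finset.exists_mem_eq_inf' huniv (fun s' => d s' b + g0 s')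
    have h1 : w a ≤ d s' a + g0 s' := Finset.inf'_le _ (Finset.mem_univ s')
    have htri := hpm.2.2 s' b a
    have hsym := hpm.2.1 b a
    have h2 : w b = d s' b + g0 s' := hs'
    linarith
  have hobj3 : c < ∑ s, (Δ s - Θ s) * w s := by
    have h1 : ∑ s, Δ s * f0 s ≤ ∑ s, Δ s * w s :=
      Finset.sum_le_sum fun s _ => mul_le_mul_of_nonneg_left (hf_le_w s) (hΔ.1 s)
    have h2 : ∑ t, Θ t * w t ≤ ∑ t, Θ t * g0 t :=
      Finset.sum_le_sum fun t _ => mul_le_mul_of_nonneg_left (hw_le_g t) (hΘ.1 t)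
    have h3 : ∑ s, (Δ s - Θ s) * w s = ∑ s, Δ s * w s - ∑ s, Θ s * w s := by
      rw [← Finset.sum_sub_distrib]; exact Finset.sum_congr rfl fun s _ => by ring
    linarith
  -- normalize into [0,1]
  obtain ⟨t0, -, ht0⟩ := Finset.exists_mem_eq_inf' huniv w
  set v : S → ℝ := fun t => w t - Finset.univ.inf' huniv w with hv
  have hv0 : ∀ t, 0 ≤ v t := by
    intro t
    have := Finset.inf'_le w (Finset.mem_univ t)
    simp only [hv, sub_nonneg]
    exact this
  have hv1 : ∀ t, v t ≤ 1 := by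
    intro t
    have h1 : v t = w t - w t0 := by rw [hv]; rw [ht0]
    have h2 := hwLip t t0
    have h3 := (hb t t0).2
    linarith
  have hvLip : ∀ a b, v a - v b ≤ d a b := by
    intro a b
    have := hwLip a b
    simp only [hv]
    linarith
  refine ⟨v, fun s => ⟨hv0 s, hv1 s⟩, hvLip, ?_⟩
  have hshift : ∑ s, (Δ s - Θ s) * v s = ∑ s, (Δ s - Θ s) * w s := by
    simp only [hv, mul_sub]
    rw [Finset.sum_sub_distrib, ← Finset.sum_mul, Finset.sum_sub_distrib, hΔ.2, hΘ.2]
    ring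
  rw [hshift]
  exact hobj3

-- dLogic basics
theorem dLogic_set_nonempty {S A : Type} [Fintype S] (T : PLTS S A) (s t : S) :
    {r | ∃ φ : SF A, r = |semS T φ s - semS T φ t|}.Nonempty :=
  ⟨|semS T (SF.top : SF A) s - semS T SF.top t|, SF.top, rfl⟩

theorem dLogic_set_bddAbove {S A : Type} [Fintype S] (T : PLTS S A)
    (hwf : WellFormed T) (hfin : ImageFinite T) (s t : S) :
    BddAbove {r | ∃ φ : SF A, r = |semS T φ s - semS T φ t|} := by
  refine ⟨1, ?_⟩
  rintro r ⟨φ, rfl⟩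
  have h1 := semS_bounds T hwf hfin φ s
  have h2 := semS_bounds T hwf hfin φ t
  rw [abs_le]
  constructor <;> linarith [h1.1, h1.2, h2.1, h2.2]

theorem dLogic_bounds {S A : Type} [Fintype S] (T : PLTS S A)
    (hwf : WellFormed T) (hfin : ImageFinite T) : Bounded1 (dLogic T) := by
  intro s t
  constructor
  · refine le_csSup (dLogic_set_bddAbove T hwf hfin s t) ?_
    refine ⟨SF.top, ?_⟩
    simp [semS]
  · refine csSup_le (dLogic_set_nonempty T s t) ?_
    rintro r ⟨φ, rfl⟩
    have h1 := semS_bounds T hwf hfin φ s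
    have h2 := semS_bounds T hwf hfin φ t
    rw [abs_le]
    constructor <;> linarith [h1.1, h1.2, h2.1, h2.2]

theorem dLogic_pseudo {S A : Type} [Fintype S] (T : PLTS S A)
    (hwf : WellFormed T) (hfin : ImageFinite T) : IsPseudometric (dLogic T) := by
  refine ⟨fun s => ?_, fun s t => ?_, fun s t r => ?_⟩
  · have : {r | ∃ φ : SF A, r = |semS T φ s - semS T φ s|} = {0} := by
      ext r
      constructor
      · rintro ⟨φ, rfl⟩; simp
      · rintro rfl; exact ⟨SF.top, by simp⟩
    rw [dLogic, this, csSup_singleton]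
  · have : {r | ∃ φ : SF A, r = |semS T φ s - semS T φ t|}
        = {r | ∃ φ : SF A, r = |semS T φ t - semS T φ s|} := by
      ext r
      constructor <;> rintro ⟨φ, rfl⟩ <;> exact ⟨φ, (abs_sub_comm _ _)⟩
    rw [dLogic, dLogic, this]
  · refine csSup_le (dLogic_set_nonempty T s r) ?_
    rintro x ⟨φ, rfl⟩
    calc |semS T φ s - semS T φ r|
        ≤ |semS T φ s - semS T φ t| + |semS T φ t - semS T φ r| := abs_sub_le _ _ _
      _ ≤ dLogic T s t + dLogic T t r := by
          gcongr
          · exact le_csSup (dLogic_set_bddAbove T hwf hfin s t) ⟨φ, rfl⟩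
          · exact le_csSup (dLogic_set_bddAbove T hwf hfin t r) ⟨φ, rfl⟩

theorem exists_formula_lt {S A : Type} [Fintype S] (T : PLTS S A)
    {v w : S} {c : ℝ} (hc : c < dLogic T v w) :
    ∃ φ : SF A, c < semS T φ v - semS T φ w := by
  obtain ⟨r, ⟨φ, rfl⟩, hr⟩ := exists_lt_of_lt_csSup (dLogic_set_nonempty T v w) hc
  rcases abs_cases (semS T φ v - semS T φ w) with ⟨heq, -⟩ | ⟨heq, -⟩
  · exact ⟨φ, by linarith⟩
  · refine ⟨SF.neg φ, ?_⟩
    simp only [semS]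
    linarith

-- weak duality / Lipschitz functions vs Kan
theorem kan_set_nonempty {S : Type} [Fintype S] {d : S → S → ℝ} {Δ Θ : S → ℝ}
    (hΔ : IsDist Δ) (hΘ : IsDist Θ) :
    {r | ∃ ω : S × S → ℝ, IsMatching ω Δ Θ ∧ r = ∑ p : S × S, d p.1 p.2 * ω p}.Nonempty :=
  ⟨_, fun p : S × S => Δ p.1 * Θ p.2, prodMatching hΔ hΘ, rfl⟩

theorem expect_eq_fst {S : Type} [Fintype S] {ω : S × S → ℝ} {Δ Θ : S → ℝ}
    (hω : IsMatching ω Δ Θ) (g : S → ℝ) :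
    ∑ s, Δ s * g s = ∑ p : S × S, ω p * g p.1 := by
  rw [Fintype.sum_prod_type]
  refine Finset.sum_congr rfl fun s _ => ?_
  rw [← hω.2.1 s, Finset.sum_mul]

theorem expect_eq_snd {S : Type} [Fintype S] {ω : S × S → ℝ} {Δ Θ : S → ℝ}
    (hω : IsMatching ω Δ Θ) (g : S → ℝ) :
    ∑ t, Θ t * g t = ∑ p : S × S, ω p * g p.2 := by
  rw [Fintype.sum_prod_type, Finset.sum_comm]
  refine Finset.sum_congr rfl fun t _ => ?_
  rw [← hω.2.2 t, Finset.sum_mul]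

theorem abs_expect_sub_le_kan {S : Type} [Fintype S] {d : S → S → ℝ}
    {Δ Θ : S → ℝ} (hΔ : IsDist Δ) (hΘ : IsDist Θ) (g : S → ℝ)
    (hg : ∀ s t, |g s - g t| ≤ d s t) :
    |∑ s, Δ s * g s - ∑ t, Θ t * g t| ≤ Kan d Δ Θ := by
  refine le_csInf (kan_set_nonempty hΔ hΘ) ?_
  rintro r ⟨ω, hω, rfl⟩
  rw [expect_eq_fst hω g, expect_eq_snd hω g, ← Finset.sum_sub_distrib]
  calc |∑ p : S × S, (ω p * g p.1 - ω p * g p.2)|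
      ≤ ∑ p : S × S, |ω p * g p.1 - ω p * g p.2| := Finset.abs_sum_le_sum_abs _ _
    _ ≤ ∑ p : S × S, d p.1 p.2 * ω p := by
        refine Finset.sum_le_sum fun p _ => ?_
        rw [← mul_sub, abs_mul, abs_of_nonneg (hω.1.1 p), mul_comm]
        exact mul_le_mul_of_nonneg_right (hg p.1 p.2) (hω.1.1 p)

-- soundness: formulae are nonexpansive wrt any SBM
mutual
theorem semS_lip {S A : Type} [Fintype S] (T : PLTS S A)
    (hwf : WellFormed T) (hfin : ImageFinite T) (d : S → S → ℝ) (hd : IsSBM T d) :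
    ∀ φ : SF A, ∀ s t, |semS T φ s - semS T φ t| ≤ d s t
  | SF.top, s, t => by simpa [semS] using (hd.2.1 s t).1
  | SF.neg φ, s, t => by
    have := semS_lip T hwf hfin d hd φ s t
    simp only [semS]
    rw [show (1 - semS T φ s) - (1 - semS T φ t) = -(semS T φ s - semS T φ t) by ring,
      abs_neg]
    exact this
  | SF.sub φ p, s, t => by
    have := semS_lip T hwf hfin d hd φ s t
    simp only [semS]
    exact le_trans (abs_max_sub_max_le_abs _ _ _) (by simpa using this)
  | SF.and φ₁ φ₂, s, t => by
    have h1 := semS_lip T hwf hfin d hd φ₁ s t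
    have h2 := semS_lip T hwf hfin d hd φ₂ s t
    simp only [semS]
    exact le_trans (abs_min_sub_min_le_max _ _ _ _) (max_le h1 h2)
  | SF.dia a ψ, s, t => by
    have hdst := (hd.2.1 s t).1
    have hset : ∀ z : S, {r | ∃ Δ, T.trans z a Δ ∧ r = semD T ψ Δ}
        = (semD T ψ) '' (der T z a) := by
      intro z; ext r; simp [der, eq_comm]
    have hfins : ∀ z : S, {r | ∃ Δ, T.trans z a Δ ∧ r = semD T ψ Δ}.Finite := by
      intro z; rw [hset z]; exact ((hfin z a).image _)
    simp only [semS]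
    rcases le_or_gt 1 (d s t) with h1 | h1
    · rw [abs_le]
      have bs : 0 ≤ sup0 {r | ∃ Δ, T.trans s a Δ ∧ r = semD T ψ Δ} ∧
          sup0 {r | ∃ Δ, T.trans s a Δ ∧ r = semD T ψ Δ} ≤ 1 := by
        constructor
        · refine sup0_nonneg (hfins s) ?_
          rintro r ⟨Δ, hΔ, rfl⟩
          exact (semD_bounds T hwf hfin ψ Δ (hwf s a Δ hΔ)).1
        · refine sup0_le (by norm_num) ?_
          rintro r ⟨Δ, hΔ, rfl⟩
          exact (semD_bounds T hwf hfin ψ Δ (hwf s a Δ hΔ)).2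
      have bt : 0 ≤ sup0 {r | ∃ Δ, T.trans t a Δ ∧ r = semD T ψ Δ} ∧
          sup0 {r | ∃ Δ, T.trans t a Δ ∧ r = semD T ψ Δ} ≤ 1 := by
        constructor
        · refine sup0_nonneg (hfins t) ?_
          rintro r ⟨Δ, hΔ, rfl⟩
          exact (semD_bounds T hwf hfin ψ Δ (hwf t a Δ hΔ)).1
        · refine sup0_le (by norm_num) ?_
          rintro r ⟨Δ, hΔ, rfl⟩
          exact (semD_bounds T hwf hfin ψ Δ (hwf t a Δ hΔ)).2
      constructor <;> linarith [bs.1, bs.2, bt.1, bt.2]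
    · -- use the transfer property in both directions
      have key : ∀ z w : S, d z w ≤ d s t →
          sup0 {r | ∃ Δ, T.trans z a Δ ∧ r = semD T ψ Δ}
            ≤ sup0 {r | ∃ Δ, T.trans w a Δ ∧ r = semD T ψ Δ} + d s t := by
        intro z w hzw
        refine sup0_le ?_ ?_
        · have : 0 ≤ sup0 {r | ∃ Δ, T.trans w a Δ ∧ r = semD T ψ Δ} := by
            refine sup0_nonneg (hfins w) ?_
            rintro r ⟨Δ, hΔ, rfl⟩
            exact (semD_bounds T hwf hfin ψ Δ (hwf w a Δ hΔ)).1
          linarith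
        · rintro r ⟨Δ, hΔ, rfl⟩
          obtain ⟨Δ', hΔ', hK⟩ := hd.2.2 z w (d s t) hdst h1 hzw a Δ hΔ
          have habs : |semD T ψ Δ - semD T ψ Δ'| ≤ Kan d Δ Δ' :=
            semD_lip T hwf hfin d hd ψ Δ Δ' (hwf z a Δ hΔ) (hwf w a Δ' hΔ')
          have hle : semD T ψ Δ ≤ semD T ψ Δ' + d s t := by
            have := abs_le.mp habs
            linarith [this.2]
          have hmem : semD T ψ Δ' ∈ {r | ∃ Δ0, T.trans w a Δ0 ∧ r = semD T ψ Δ0} :=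
            ⟨Δ', hΔ', rfl⟩
          have := le_sup0 (hfins w) hmem
          linarith
      rw [abs_sub_le_iff]
      constructor
      · linarith [key s t (le_refl _)]
      · have hsym : d t s = d s t := hd.1.2.1 t s
        linarith [key t s (le_of_eq hsym)]

theorem semD_lip {S A : Type} [Fintype S] (T : PLTS S A)
    (hwf : WellFormed T) (hfin : ImageFinite T) (d : S → S → ℝ) (hd : IsSBM T d) :
    ∀ ψ : DF A, ∀ Δ Θ, IsDist Δ → IsDist Θ → |semD T ψ Δ - semD T ψ Θ| ≤ Kan d Δ Θ
  | DF.sub ψ p, Δ, Θ, hΔ, hΘ => by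
    have := semD_lip T hwf hfin d hd ψ Δ Θ hΔ hΘ
    simp only [semD]
    exact le_trans (abs_max_sub_max_le_abs _ _ _) (by simpa using this)
  | DF.and ψ₁ ψ₂, Δ, Θ, hΔ, hΘ => by
    have h1 := semD_lip T hwf hfin d hd ψ₁ Δ Θ hΔ hΘ
    have h2 := semD_lip T hwf hfin d hd ψ₂ Δ Θ hΔ hΘ
    simp only [semD]
    exact le_trans (abs_min_sub_min_le_max _ _ _ _) (max_le h1 h2)
  | DF.box φ, Δ, Θ, hΔ, hΘ => by
    simp only [semD]
    exact abs_expect_sub_le_kan hΔ hΘ (semS T φ) (semS_lip T hwf hfin d hd φ)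
end

-- formula combinators
def SF.addc {A : Type} (φ : SF A) (p : UI) : SF A := SF.neg (SF.sub (SF.neg φ) p)

theorem semS_addc {S A : Type} [Fintype S] (T : PLTS S A) (φ : SF A) (p : UI) (s : S) :
    semS T (SF.addc φ p) s = min (semS T φ s + p.1) 1 := by
  simp only [SF.addc, semS]
  rcases le_total (semS T φ s + p.1) 1 with h | h
  · rw [max_eq_left (by linarith), min_eq_left h]; ring
  · rw [max_eq_right (by linarith), min_eq_right h]; ring

def bigAnd {A : Type} : SF A → List (SF A) → SF A
  | base, [] => base
  | base, φ :: l => SF.and φ (bigAnd base l)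

theorem bigAnd_le_base {S A : Type} [Fintype S] (T : PLTS S A) (base : SF A)
    (l : List (SF A)) (s : S) : semS T (bigAnd base l) s ≤ semS T base s := by
  induction l with
  | nil => exact le_refl _
  | cons φ l ih =>
    simp only [bigAnd, semS]
    exact le_trans (min_le_right _ _) ih

theorem bigAnd_le_mem {S A : Type} [Fintype S] (T : PLTS S A) {base φ : SF A}
    {l : List (SF A)} (h : φ ∈ l) (s : S) : semS T (bigAnd base l) s ≤ semS T φ s := by
  induction l with
  | nil => simp at h
  | cons ψ l ih =>
    simp only [bigAnd, semS]
    rcases List.mem_cons.mp h with rfl | h'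
    · exact min_le_left _ _
    · exact le_trans (min_le_right _ _) (ih h')

theorem le_bigAnd {S A : Type} [Fintype S] (T : PLTS S A) {base : SF A}
    {l : List (SF A)} {b : ℝ} {s : S} (hbase : b ≤ semS T base s)
    (h : ∀ φ ∈ l, b ≤ semS T φ s) : b ≤ semS T (bigAnd base l) s := by
  induction l with
  | nil => exact hbase
  | cons ψ l ih =>
    simp only [bigAnd, semS]
    exact le_min (h ψ (List.mem_cons_self)) (ih fun φ hφ => h φ (List.mem_cons_of_mem _ hφ))

def bigOr {A : Type} (base : SF A) (l : List (SF A)) : SF A :=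
  SF.neg (bigAnd (SF.neg base) (l.map SF.neg))

theorem le_bigOr_mem {S A : Type} [Fintype S] (T : PLTS S A) {base φ : SF A}
    {l : List (SF A)} (h : φ ∈ l) (s : S) : semS T φ s ≤ semS T (bigOr base l) s := by
  have := bigAnd_le_mem T (base := SF.neg base) (List.mem_map_of_mem (f := SF.neg) h) s
  simp only [bigOr, semS] at *
  linarith

theorem bigOr_le {S A : Type} [Fintype S] (T : PLTS S A) {base : SF A}
    {l : List (SF A)} {b : ℝ} {s : S} (hbase : semS T base s ≤ b)
    (h : ∀ φ ∈ l, semS T φ s ≤ b) : semS T (bigOr base l) s ≤ b := by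
  have : 1 - b ≤ semS T (bigAnd (SF.neg base) (l.map SF.neg)) s := by
    refine le_bigAnd T (by simp only [semS]; linarith) ?_
    intro φ hφ
    obtain ⟨ψ, hψ, rfl⟩ := List.mem_map.mp hφ
    simp only [semS]
    linarith [h ψ hψ]
  simp only [bigOr, semS]
  linarith

def bigAndD {A : Type} : DF A → List (DF A) → DF A
  | base, [] => base
  | base, ψ :: l => DF.and ψ (bigAndD base l)

theorem bigAndD_le_mem {S A : Type} [Fintype S] (T : PLTS S A) {base ψ : DF A}
    {l : List (DF A)} (h : ψ ∈ l) (Δ : S → ℝ) :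
    semD T (bigAndD base l) Δ ≤ semD T ψ Δ := by
  induction l with
  | nil => simp at h
  | cons χ l ih =>
    simp only [bigAndD, semD]
    rcases List.mem_cons.mp h with rfl | h'
    · exact min_le_left _ _
    · exact le_trans (min_le_right _ _) (ih h')

theorem le_bigAndD {S A : Type} [Fintype S] (T : PLTS S A) {base : DF A}
    {l : List (DF A)} {b : ℝ} {Δ : S → ℝ} (hbase : b ≤ semD T base Δ)
    (h : ∀ ψ ∈ l, b ≤ semD T ψ Δ) : b ≤ semD T (bigAndD base l) Δ := by
  induction l with
  | nil => exact hbase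
  | cons χ l ih =>
    simp only [bigAndD, semD]
    exact le_min (h χ (List.mem_cons_self)) (ih fun ψ hψ => h ψ (List.mem_cons_of_mem _ hψ))

theorem bigAndD_le_base {S A : Type} [Fintype S] (T : PLTS S A) (base : DF A)
    (l : List (DF A)) (Δ : S → ℝ) : semD T (bigAndD base l) Δ ≤ semD T base Δ := by
  induction l with
  | nil => exact le_refl _
  | cons χ l ih =>
    simp only [bigAndD, semD]
    exact le_trans (min_le_right _ _) ih

-- uniform approximation of Lipschitz functions by formulae
theorem approx_formula {S A : Type} [Fintype S] (T : PLTS S A)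
    (hwf : WellFormed T) (hfin : ImageFinite T) (hne : Nonempty S) (u : S → ℝ)
    (hu : ∀ z, 0 ≤ u z ∧ u z ≤ 1) (hLip : ∀ v w, u v - u w ≤ dLogic T v w)
    {δ : ℝ} (hδ : 0 < δ) :
    ∃ φ : SF A, ∀ z, u z ≤ semS T φ z ∧ semS T φ z ≤ u z + δ := by
  classical
  have hpair : ∀ v w : S, ∃ ζ : SF A, semS T ζ v = u v ∧ semS T ζ w ≤ u w + δ := by
    intro v w
    have h1 : u v - u w - δ < dLogic T v w := by linarith [hLip v w]
    obtain ⟨φ, hφ⟩ := exists_formula_lt T h1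
    have hab := semS_bounds T hwf hfin φ v
    have hbb := semS_bounds T hwf hfin φ w
    rcases le_total (semS T φ v) (u v) with hc | hc
    · have hc1 : u v - semS T φ v ≤ 1 := by linarith [(hu v).2, hab.1]
      refine ⟨SF.addc φ ⟨u v - semS T φ v, by linarith, hc1⟩, ?_, ?_⟩
      · rw [semS_addc]
        simp only
        rw [show semS T φ v + (u v - semS T φ v) = u v by ring]
        exact min_eq_left (hu v).2
      · rw [semS_addc]
        refine le_trans (min_le_left _ _) ?_
        simp only
        linarith
    · refine ⟨SF.sub φ ⟨semS T φ v - u v, by linarith, by linarith [hab.2, (hu v).1]⟩, ?_, ?_⟩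
      · simp only [semS]
        rw [show semS T φ v - (semS T φ v - u v) = u v by ring]
        exact max_eq_left (hu v).1
      · simp only [semS]
        refine max_le (by linarith) (by linarith [(hu w).1])
  choose ζ hζ1 hζ2 using hpair
  have hLmem : ∀ w : S, w ∈ Finset.univ.toList (α := S) :=
    fun w => Finset.mem_toList.mpr (Finset.mem_univ w)
  set χ : S → SF A := fun v => bigAnd (ζ v v) (Finset.univ.toList.map (ζ v)) with hχ
  have hχv : ∀ v, semS T (χ v) v = u v := by
    intro v
    apply le_antisymm
    · exact le_trans (bigAnd_le_base T _ _ _) (le_of_eq (hζ1 v v))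
    · refine le_bigAnd T (le_of_eq (hζ1 v v).symm) ?_
      intro φ hφ
      obtain ⟨w, -, rfl⟩ := List.mem_map.mp hφ
      exact le_of_eq (hζ1 v w).symm
  have hχw : ∀ v w, semS T (χ v) w ≤ u w + δ := by
    intro v w
    exact le_trans (bigAnd_le_mem T (List.mem_map_of_mem (f := ζ v) (hLmem w)) w) (hζ2 v w)
  obtain ⟨v0⟩ := hne
  refine ⟨bigOr (χ v0) (Finset.univ.toList.map χ), fun z => ⟨?_, ?_⟩⟩
  · have := le_bigOr_mem T (base := χ v0) (List.mem_map_of_mem (f := χ) (hLmem z)) z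
    rw [hχv z] at this
    exact this
  · refine bigOr_le T (hχw v0 z) ?_
    intro φ hφ
    obtain ⟨v, -, rfl⟩ := List.mem_map.mp hφ
    exact hχw v z

-- the transfer property for the logical metric (completeness core)
theorem dLogic_transfer {S A : Type} [Fintype S] (T : PLTS S A)
    (hwf : WellFormed T) (hfin : ImageFinite T) :
    ∀ s t (ε : ℝ), 0 ≤ ε → ε < 1 → dLogic T s t ≤ ε →
      ∀ a Δ, T.trans s a Δ → ∃ Δ', T.trans t a Δ' ∧ Kan (dLogic T) Δ Δ' ≤ ε := by
  intro s t ε hε0 hε1 hd a Δ hΔ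
  by_contra hcon
  push_neg at hcon
  classical
  have hΔdist : IsDist Δ := hwf s a Δ hΔ
  have hne : Nonempty S := nonempty_of_isDist hΔdist
  have hsetfin : ∀ (ψ : DF A) (z : S), {r | ∃ Δ0, T.trans z a Δ0 ∧ r = semD T ψ Δ0}.Finite := by
    intro ψ z
    have : {r | ∃ Δ0, T.trans z a Δ0 ∧ r = semD T ψ Δ0} = (semD T ψ) '' (der T z a) := by
      ext r; simp [der, eq_comm]
    rw [this]
    exact (hfin z a).image _
  set F : Finset (S → ℝ) := (hfin t a).toFinset with hF
  have hFmem : ∀ Δ', Δ' ∈ F ↔ T.trans t a Δ' := by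
    intro Δ'
    rw [hF, Set.Finite.mem_toFinset]
    rfl
  rcases Finset.eq_empty_or_nonempty F with hFe | hFne
  · -- no a-transition from t at all
    set φ0 : SF A := SF.dia a (DF.box SF.top) with hφ0
    have hvs : (1:ℝ) ≤ semS T φ0 s := by
      have hmem : semD T (DF.box (SF.top : SF A)) Δ
          ∈ {r | ∃ Δ0, T.trans s a Δ0 ∧ r = semD T (DF.box (SF.top : SF A)) Δ0} :=
        ⟨Δ, hΔ, rfl⟩
      have h1 : semD T (DF.box (SF.top : SF A)) Δ = 1 := by
        simp only [semD, semS, mul_one]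
        exact hΔdist.2
      have := le_sup0 (hsetfin _ s) hmem
      rw [h1] at this
      exact this
    have hvt : semS T φ0 t = 0 := by
      have hempty : {r | ∃ Δ0, T.trans t a Δ0 ∧ r = semD T (DF.box (SF.top : SF A)) Δ0}
          = (∅ : Set ℝ) := by
        ext r
        simp only [Set.mem_setOf_eq, Set.mem_empty_iff_false, iff_false, not_exists]
        intro Δ' hΔ'
        have : Δ' ∈ F := (hFmem Δ').mpr hΔ'.1
        simp [hFe] at this
      show sup0 _ = 0
      rw [hempty, sup0, if_neg (by simp)]
    have hge : dLogic T s t ≥ |semS T φ0 s - semS T φ0 t| :=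
      le_csSup (dLogic_set_bddAbove T hwf hfin s t) ⟨φ0, rfl⟩
    rw [hvt, sub_zero] at hge
    have : (1:ℝ) ≤ |semS T φ0 s| := le_trans hvs (le_abs_self _)
    linarith
  · -- choose dual witnesses and approximating formulae
    have hex : ∀ Δ' : S → ℝ, ∃ (ψ : DF A) (γ : ℝ), 0 < γ ∧
        0 ≤ semD T ψ Δ ∧ semD T ψ Δ ≤ 1 ∧
        (Δ' ∈ F → (ε + γ ≤ semD T ψ Δ ∧ semD T ψ Δ' ≤ semD T ψ Δ - ε - γ)) := by
      intro Δ'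
      by_cases hmem : Δ' ∈ F
      · have hΔ'dist : IsDist Δ' := hwf t a Δ' ((hFmem Δ').mp hmem)
        have hK : ε < Kan (dLogic T) Δ Δ' := hcon Δ' ((hFmem Δ').mp hmem)
        obtain ⟨u, hu01, hulip, hugt⟩ :=
          kan_dual_approx (dLogic_pseudo T hwf hfin) (dLogic_bounds T hwf hfin)
            hΔdist hΔ'dist hK
        set e := ∑ z, (Δ z - Δ' z) * u z with he
        have hδ : 0 < (e - ε) / 2 := by linarith
        obtain ⟨Φ, hΦ⟩ := approx_formula T hwf hfin hne u hu01
          (fun v w => hulip v w) hδ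
        refine ⟨DF.box Φ, (e - ε) / 2, hδ, ?_, ?_, fun _ => ⟨?_, ?_⟩⟩
        · exact (semD_bounds T hwf hfin _ Δ hΔdist).1
        · exact (semD_bounds T hwf hfin _ Δ hΔdist).2
        · -- ε + γ ≤ semD (box Φ) Δ
          have h1 : ∑ z, Δ z * u z ≤ ∑ z, Δ z * semS T Φ z :=
            Finset.sum_le_sum fun z _ => mul_le_mul_of_nonneg_left (hΦ z).1 (hΔdist.1 z)
          have h2 : (0:ℝ) ≤ ∑ z, Δ' z * u z :=
            Finset.sum_nonneg fun z _ => mul_nonneg (hΔ'dist.1 z) (hu01 z).1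
          have h3 : e = ∑ z, Δ z * u z - ∑ z, Δ' z * u z := by
            rw [he, ← Finset.sum_sub_distrib]
            exact Finset.sum_congr rfl fun z _ => by ring
          simp only [semD]
          linarith
        · -- semD (box Φ) Δ' ≤ semD (box Φ) Δ - ε - γ
          have h1 : ∑ z, Δ z * u z ≤ ∑ z, Δ z * semS T Φ z :=
            Finset.sum_le_sum fun z _ => mul_le_mul_of_nonneg_left (hΦ z).1 (hΔdist.1 z)
          have h2 : ∑ z, Δ' z * semS T Φ z ≤ ∑ z, Δ' z * u z + (e - ε) / 2 := by
            have : ∑ z, Δ' z * semS T Φ z ≤ ∑ z, Δ' z * (u z + (e - ε)/2) :=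
              Finset.sum_le_sum fun z _ =>
                mul_le_mul_of_nonneg_left (hΦ z).2 (hΔ'dist.1 z)
            have h4 : ∑ z, Δ' z * (u z + (e - ε)/2)
                = ∑ z, Δ' z * u z + (e - ε)/2 := by
              have he2 : ∀ z ∈ Finset.univ, Δ' z * (u z + (e-ε)/2)
                  = Δ' z * u z + Δ' z * ((e-ε)/2) := fun z _ => by ring
              rw [Finset.sum_congr rfl he2, Finset.sum_add_distrib, ← Finset.sum_mul,
                hΔ'dist.2, one_mul]
            linarith
          have h3 : e = ∑ z, Δ z * u z - ∑ z, Δ' z * u z := by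
            rw [he, ← Finset.sum_sub_distrib]
            exact Finset.sum_congr rfl fun z _ => by ring
          simp only [semD]
          linarith
      · exact ⟨DF.box SF.top, 1, by norm_num,
          (semD_bounds T hwf hfin _ Δ hΔdist).1,
          (semD_bounds T hwf hfin _ Δ hΔdist).2, fun h => absurd h hmem⟩
    choose ψf γf hγpos hlo hhi hKey using hex
    set c : ℝ := F.inf' hFne (fun Δ' => semD T (ψf Δ') Δ) with hc
    set γm : ℝ := F.inf' hFne γf with hγm
    have hγmpos : 0 < γm := by
      rw [hγm, Finset.lt_inf'_iff]
      exact fun Δ' _ => hγpos Δ'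
    have hcge : ε + γm ≤ c := by
      rw [hc, Finset.le_inf'_iff]
      intro Δ' hmem
      have h1 := (hKey Δ' hmem).1
      have h2 : γm ≤ γf Δ' := Finset.inf'_le _ hmem
      linarith
    have hc0 : 0 ≤ c := by
      rw [hc, Finset.le_inf'_iff]
      exact fun Δ' _ => hlo Δ'
    -- build the subtracted formulae
    set q : (S → ℝ) → UI := fun Δ' =>
      ⟨max 0 (min 1 (semD T (ψf Δ') Δ - c)), le_max_left _ _,
        max_le (by norm_num) (min_le_left _ _)⟩ with hq
    have hqval : ∀ Δ' ∈ F, (q Δ').1 = semD T (ψf Δ') Δ - c := by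
      intro Δ' hmem
      have h1 : 0 ≤ semD T (ψf Δ') Δ - c := by
        have := Finset.inf'_le (fun Δ0 => semD T (ψf Δ0) Δ) hmem
        rw [← hc] at this
        linarith
      have h2 : semD T (ψf Δ') Δ - c ≤ 1 := by
        have := hhi Δ'
        linarith
      simp only [hq]
      rw [min_eq_right h2, max_eq_right h1]
    set ψ' : (S → ℝ) → DF A := fun Δ' => DF.sub (ψf Δ') (q Δ') with hψ'
    have hψ'Δ : ∀ Δ' ∈ F, semD T (ψ' Δ') Δ = c := by
      intro Δ' hmem
      show max (semD T (ψf Δ') Δ - (q Δ').1) 0 = c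
      rw [hqval Δ' hmem]
      rw [show semD T (ψf Δ') Δ - (semD T (ψf Δ') Δ - c) = c by ring]
      exact max_eq_left hc0
    have hψ'Δ' : ∀ Δ' ∈ F, semD T (ψ' Δ') Δ' ≤ max (c - ε - γm) 0 := by
      intro Δ' hmem
      show max (semD T (ψf Δ') Δ' - (q Δ').1) 0 ≤ _
      rw [hqval Δ' hmem]
      refine max_le_max ?_ (le_refl 0)
      have h1 := (hKey Δ' hmem).2
      have h2 : γm ≤ γf Δ' := Finset.inf'_le _ hmem
      linarith
    obtain ⟨Δ0', hΔ0'⟩ := hFne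
    set Ψ : DF A := bigAndD (ψ' Δ0') (F.toList.map ψ') with hΨ
    have hΨΔ : semD T Ψ Δ = c := by
      apply le_antisymm
      · exact le_trans (bigAndD_le_base T _ _ _) (le_of_eq (hψ'Δ Δ0' hΔ0'))
      · refine le_bigAndD T (le_of_eq (hψ'Δ Δ0' hΔ0').symm) ?_
        intro χ hχ
        obtain ⟨Δ', hΔ'l, rfl⟩ := List.mem_map.mp hχ
        exact le_of_eq (hψ'Δ Δ' (Finset.mem_toList.mp hΔ'l)).symm
    have hΨΔ' : ∀ Δ' ∈ F, semD T Ψ Δ' ≤ max (c - ε - γm) 0 := by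
      intro Δ' hmem
      refine le_trans (bigAndD_le_mem T ?_ Δ') (hψ'Δ' Δ' hmem)
      exact List.mem_map_of_mem (f := ψ') (Finset.mem_toList.mpr hmem)
    set φstar : SF A := SF.dia a Ψ with hφstar
    have hvs : c ≤ semS T φstar s := by
      have hmem : semD T Ψ Δ ∈ {r | ∃ Δ0, T.trans s a Δ0 ∧ r = semD T Ψ Δ0} := ⟨Δ, hΔ, rfl⟩
      have := le_sup0 (hsetfin Ψ s) hmem
      rw [hΨΔ] at this
      exact this
    have hvt : semS T φstar t ≤ max (c - ε - γm) 0 := by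
      refine sup0_le (le_max_right _ _) ?_
      rintro r ⟨Δ', hΔ', rfl⟩
      exact hΨΔ' Δ' ((hFmem Δ').mpr hΔ')
    have hge : dLogic T s t ≥ |semS T φstar s - semS T φstar t| :=
      le_csSup (dLogic_set_bddAbove T hwf hfin s t) ⟨φstar, rfl⟩
    have habs : semS T φstar s - semS T φstar t ≤ |semS T φstar s - semS T φstar t| :=
      le_abs_self _
    rcases le_or_gt (c - ε - γm) 0 with hcc | hcc
    · rw [max_eq_right hcc] at hvt
      linarith
    · rw [max_eq_left (le_of_lt hcc)] at hvt
      linarith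

/-- Completeness of the metric HML: the logical state metric is itself a
state-based bisimulation metric; hence it coincides with the state-based
bisimilarity metric, and the Kantorovich lifting of the bisimilarity metric
coincides with the logical distribution metric. -/
theorem hml_completeness {S A : Type} [Fintype S] (T : PLTS S A)
    (hwf : WellFormed T) (hfin : ImageFinite T) :
    IsSBM T (dLogic T) ∧
    ∀ db : S → S → ℝ,
      (IsSBM T db ∧ ∀ d, IsSBM T d → ∀ s t, db s t ≤ d s t) →
      ((∀ s t, db s t ≤ dLogic T s t) ∧
       (∀ s t, db s t = dLogic T s t) ∧
       ∀ Δ Θ : S → ℝ, IsDist Δ → IsDist Θ → Kan db Δ Θ = dDLogic T Δ Θ) := by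
  have hsbm : IsSBM T (dLogic T) :=
    ⟨dLogic_pseudo T hwf hfin, dLogic_bounds T hwf hfin, dLogic_transfer T hwf hfin⟩
  refine ⟨hsbm, ?_⟩
  rintro db ⟨hdb, hleast⟩
  have hle : ∀ s t, db s t ≤ dLogic T s t := hleast _ hsbm
  have heq : ∀ s t, db s t = dLogic T s t := by
    intro s t
    refine le_antisymm (hle s t) ?_
    refine csSup_le (dLogic_set_nonempty T s t) ?_
    rintro r ⟨φ, rfl⟩
    exact semS_lip T hwf hfin db hdb φ s t
  refine ⟨hle, heq, ?_⟩
  intro Δ Θ hΔ hΘ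
  have hdbfun : db = dLogic T := funext fun s => funext fun t => heq s t
  have hDne : {r | ∃ ψ : DF A, r = |semD T ψ Δ - semD T ψ Θ|}.Nonempty :=
    ⟨_, DF.box SF.top, rfl⟩
  have hDbdd : BddAbove {r | ∃ ψ : DF A, r = |semD T ψ Δ - semD T ψ Θ|} := by
    refine ⟨1, ?_⟩
    rintro r ⟨ψ, rfl⟩
    have h1 := semD_bounds T hwf hfin ψ Δ hΔ
    have h2 := semD_bounds T hwf hfin ψ Θ hΘ
    rw [abs_le]
    constructor <;> linarith [h1.1, h1.2, h2.1, h2.2]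
  apply le_antisymm
  · -- Kan db ≤ dDLogic
    rw [hdbfun]
    by_contra hlt
    rw [not_le] at hlt
    obtain ⟨u, hu01, hulip, hugt⟩ :=
      kan_dual_approx (dLogic_pseudo T hwf hfin) (dLogic_bounds T hwf hfin) hΔ hΘ hlt
    set e := ∑ z, (Δ z - Θ z) * u z with he
    set c := dDLogic T Δ Θ with hcd
    have hδ : 0 < (e - c) / 2 := by linarith
    obtain ⟨Φ, hΦ⟩ := approx_formula T hwf hfin (nonempty_of_isDist hΔ) u hu01
      (fun v w => hulip v w) hδ
    have h1 : ∑ z, Δ z * u z ≤ ∑ z, Δ z * semS T Φ z :=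
      Finset.sum_le_sum fun z _ => mul_le_mul_of_nonneg_left (hΦ z).1 (hΔ.1 z)
    have h2 : ∑ z, Θ z * semS T Φ z ≤ ∑ z, Θ z * u z + (e - c) / 2 := by
      have h5 : ∑ z, Θ z * semS T Φ z ≤ ∑ z, Θ z * (u z + (e - c)/2) :=
        Finset.sum_le_sum fun z _ => mul_le_mul_of_nonneg_left (hΦ z).2 (hΘ.1 z)
      have h4 : ∑ z, Θ z * (u z + (e - c)/2) = ∑ z, Θ z * u z + (e - c)/2 := by
        have he2 : ∀ z ∈ Finset.univ, Θ z * (u z + (e - c)/2)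
            = Θ z * u z + Θ z * ((e - c)/2) := fun z _ => by ring
        rw [Finset.sum_congr rfl he2, Finset.sum_add_distrib, ← Finset.sum_mul,
          hΘ.2, one_mul]
      linarith
    have h3 : e = ∑ z, Δ z * u z - ∑ z, Θ z * u z := by
      rw [he, ← Finset.sum_sub_distrib]
      exact Finset.sum_congr rfl fun z _ => by ring
    have hval : e - (e - c)/2 ≤ semD T (DF.box Φ) Δ - semD T (DF.box Φ) Θ := by
      simp only [semD]
      linarith
    have hmem : |semD T (DF.box Φ) Δ - semD T (DF.box Φ) Θ|
        ∈ {r | ∃ ψ : DF A, r = |semD T ψ Δ - semD T ψ Θ|} := ⟨DF.box Φ, rfl⟩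
    have hD : semD T (DF.box Φ) Δ - semD T (DF.box Φ) Θ ≤ c := by
      calc semD T (DF.box Φ) Δ - semD T (DF.box Φ) Θ
          ≤ |semD T (DF.box Φ) Δ - semD T (DF.box Φ) Θ| := le_abs_self _
        _ ≤ c := le_csSup hDbdd hmem
    linarith
  · refine csSup_le hDne ?_
    rintro r ⟨ψ, rfl⟩
    exact semD_lip T hwf hfin db hdb ψ Δ Θ hΔ hΘ
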